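/- In the field ℚ_p of p-adic numbers, the series Σ_{i=0}^{∞} α_i p^i converges and its sum equals c/d; that is, the sequence (α_i) is the sequence of digits of the p-adic expansion of c/d. -/

import Mathlib

/-- In ℚ_p, the series Σ α_i p^i converges with sum c/d: the α_i are the digits
of the p-adic expansion of c/d. -/
theorem stmt_3 (p : ℕ) [hp : Fact p.Prime] (c d : ℕ) (hc : 0 < c) (hd : 0 < d)
    (hcd : Nat.Coprime c d) (hcp : Nat.Coprime c p) (hdp : Nat.Coprime d p)
    (α β : ℕ → ℤ) (hβ0 : β 0 = (c : ℤ))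
    (hα : ∀ i, 0 ≤ α i ∧ α i ≤ (p : ℤ) - 1 ∧ α i * (d : ℤ) ≡ β i [ZMOD (p : ℤ)])
    (hβ : ∀ i, (p : ℤ) * β (i + 1) = β i - α i * (d : ℤ)) :
    HasSum (fun i : ℕ => (α i : ℚ_[p]) * (p : ℚ_[p]) ^ i) ((c : ℚ_[p]) / (d : ℚ_[p])) := by
  have hp1 : 1 < p := hp.out.one_lt
  set f : ℕ → ℚ_[p] := fun i => (α i : ℚ_[p]) * (p : ℚ_[p]) ^ i with hf
  -- norms of terms
  have hnorm : ∀ i, ‖f i‖ ≤ ((p : ℝ)⁻¹) ^ i := by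
    intro i
    have h1 : ‖(α i : ℚ_[p])‖ ≤ 1 := Padic.norm_int_le_one _
    have h2 : ‖(p : ℚ_[p]) ^ i‖ = ((p : ℝ)⁻¹) ^ i := by
      rw [norm_pow, Padic.norm_p]
    calc ‖f i‖ = ‖(α i : ℚ_[p])‖ * ‖(p : ℚ_[p]) ^ i‖ := norm_mul _ _
      _ ≤ 1 * ((p : ℝ)⁻¹) ^ i := by rw [h2]; gcongr
      _ = ((p : ℝ)⁻¹) ^ i := one_mul _
  have hplt : (p : ℝ)⁻¹ < 1 := by
    rw [inv_lt_one_iff₀]; right; exact_mod_cast hp1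
  have hppos : (0:ℝ) < (p:ℝ)⁻¹ := by positivity
  have hsum : Summable f :=
    Summable.of_norm_bounded (summable_geometric_of_lt_one hppos.le hplt) hnorm
  -- key identity over ℤ
  have key : ∀ n, (d : ℤ) * (∑ i ∈ Finset.range n, α i * (p:ℤ) ^ i)
      = (c : ℤ) - (p:ℤ) ^ n * β n := by
    intro n
    induction n with
    | zero => simp [hβ0]
    | succ n ih =>
      rw [Finset.sum_range_succ, mul_add, ih]
      linear_combination (p:ℤ) ^ n * hβ n
  -- partial sums tend to c/d
  have hd0 : ((d : ℚ_[p])) ≠ 0 := by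
    exact_mod_cast Nat.cast_ne_zero.mpr hd.ne'
  have hdnorm : ‖(d : ℚ_[p])‖ = 1 := by
    have hle : ‖((d:ℤ) : ℚ_[p])‖ ≤ 1 := Padic.norm_int_le_one _
    have hnd : ¬ ((p:ℤ) ∣ (d:ℤ)) := by
      intro h
      have hpd : p ∣ d := Int.ofNat_dvd.mp h
      have h1 : p ∣ 1 := hdp ▸ Nat.dvd_gcd hpd dvd_rfl
      have := Nat.le_of_dvd one_pos h1
      omega
    have hlt := (Padic.norm_intCast_lt_one_iff (k := (d:ℤ))).not.mpr hnd
    push_cast at hle hlt ⊢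
    exact le_antisymm hle (not_lt.mp hlt)
  have hdiff : ∀ n, ‖(∑ i ∈ Finset.range n, f i) - (c : ℚ_[p]) / (d : ℚ_[p])‖
      ≤ ((p : ℝ)⁻¹) ^ n := by
    intro n
    have hkey : (d : ℚ_[p]) * (∑ i ∈ Finset.range n, f i)
        = (c : ℚ_[p]) - (p : ℚ_[p]) ^ n * (β n : ℚ_[p]) := by
      have := key n
      have := congrArg (fun z : ℤ => (z : ℚ_[p])) this
      push_cast at this
      simpa [hf] using this
    have heq : (∑ i ∈ Finset.range n, f i) - (c : ℚ_[p]) / (d : ℚ_[p])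
        = -((p : ℚ_[p]) ^ n * (β n : ℚ_[p])) / (d : ℚ_[p]) := by
      field_simp
      linear_combination hkey
    rw [heq, norm_div, norm_neg, hdnorm, div_one, norm_mul, norm_pow,
      Padic.norm_p]
    have : ‖((β n : ℤ) : ℚ_[p])‖ ≤ 1 := Padic.norm_int_le_one _
    calc ((p:ℝ)⁻¹) ^ n * ‖((β n : ℤ) : ℚ_[p])‖ ≤ ((p:ℝ)⁻¹) ^ n * 1 := by gcongr
      _ = ((p:ℝ)⁻¹) ^ n := mul_one _
  have htends : Filter.Tendsto (fun n => ∑ i ∈ Finset.range n, f i)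
      Filter.atTop (nhds ((c : ℚ_[p]) / (d : ℚ_[p]))) := by
    rw [tendsto_iff_norm_sub_tendsto_zero]
    refine squeeze_zero (fun n => norm_nonneg _) hdiff ?_
    exact tendsto_pow_atTop_nhds_zero_of_lt_one hppos.le hplt
  have hS := hsum.hasSum
  have := hS.tendsto_sum_nat
  have heq := tendsto_nhds_unique this htends
  rwa [heq] at hS
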